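/- Let h : [0, b) → [1, ∞) be C¹ with h(0) = 1, h'(0) ≤ D, h increasing, and suppose a(1 - 2a/ε) h'(a) ≤ h(a) ln h(a) for all a ∈ (0, b) where b ≤ ε/2. Then h(a) ≤ exp( aD / (1 - 2a/ε) ) for all a ∈ [0, b). -/

import Mathlib

open Set Filter Topology

/-- ODE comparison lemma behind the Herbst argument: a subsolution of
`a(1 - 2a/ε) h' = h ln h` with `h(0) = 1`, `h'(0) ≤ D` satisfies
`h(a) ≤ exp(aD/(1 - 2a/ε))` on `[0, b)`, `b ≤ ε/2`. -/
theorem herbst_ode_comparison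
    (ε b D : ℝ) (hε : 0 < ε) (hb : 0 < b) (hbε : b ≤ ε / 2)
    (h h' : ℝ → ℝ)
    (hge : ∀ a ∈ Ico (0 : ℝ) b, 1 ≤ h a)
    (hderiv : ∀ a ∈ Ico (0 : ℝ) b, HasDerivAt h (h' a) a)
    (h0 : h 0 = 1)
    (h'0 : h' 0 ≤ D)
    (hmono : MonotoneOn h (Ico (0 : ℝ) b))
    (hineq : ∀ a ∈ Ioo (0 : ℝ) b,
      a * (1 - 2 * a / ε) * h' a ≤ h a * Real.log (h a)) :
    ∀ a ∈ Ico (0 : ℝ) b, h a ≤ Real.exp (a * D / (1 - 2 * a / ε)) := by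
  intro a ha
  obtain ⟨ha0, hab⟩ := ha
  rcases eq_or_lt_of_le ha0 with rfl | hapos
  · simp [h0]
  have haε : a < ε / 2 := lt_of_lt_of_le hab hbε
  have h1a : 0 < 1 - 2 * a / ε := by
    rw [sub_pos, div_lt_one hε]; linarith
  set ψ : ℝ → ℝ := fun t => Real.log (h t) with hψdef
  set φ : ℝ → ℝ := fun t => if t = 0 then h' 0 else ψ t * (1 / t - 2 / ε) with hφdef
  have hψd : ∀ t ∈ Ico (0:ℝ) b, HasDerivAt ψ (h' t / h t) t := by
    intro t ht
    exact (hderiv t ht).log (by have := hge t ht; positivity)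
  have hφ_ev : ∀ t : ℝ, t ≠ 0 → φ =ᶠ[nhds t] fun s => ψ s * (1 / s - 2 / ε) := by
    intro t ht
    filter_upwards [isOpen_compl_singleton.mem_nhds ht] with s hs
    exact if_neg hs
  -- derivative of φ away from 0
  have hφd : ∀ t ∈ Ioo (0:ℝ) b,
      HasDerivAt φ ((t * (1 - 2 * t / ε) * h' t - h t * ψ t) / (h t * t ^ 2)) t := by
    rintro t ⟨ht0, htb⟩
    have hht : (0:ℝ) < h t := by have := hge t ⟨le_of_lt ht0, htb⟩; linarith
    have h1 : HasDerivAt (fun s : ℝ => 1 / s - 2 / ε) (-(1 / t ^ 2)) t := by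
      have := (hasDerivAt_inv (ne_of_gt ht0)).sub_const (2 / ε)
      simpa [one_div] using this
    have h2 : HasDerivAt (fun s => ψ s * (1 / s - 2 / ε))
        (h' t / h t * (1 / t - 2 / ε) + ψ t * -(1 / t ^ 2)) t := (hψd t ⟨le_of_lt ht0, htb⟩).mul h1
    refine HasDerivAt.congr_of_eventuallyEq ?_ (hφ_ev t (ne_of_gt ht0))
    convert h2 using 1
    · rfl
    · rfl
    field_simp
    ring
  have hφd_nonpos : ∀ t ∈ Ioo (0:ℝ) a,
      ((t * (1 - 2 * t / ε) * h' t - h t * ψ t) / (h t * t ^ 2)) ≤ 0 := by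
    rintro t ⟨ht0, hta⟩
    have htb : t < b := lt_trans hta hab
    have hht : (0:ℝ) < h t := by have := hge t ⟨le_of_lt ht0, htb⟩; linarith
    apply div_nonpos_of_nonpos_of_nonneg
    · have := hineq t ⟨ht0, htb⟩; linarith
    · positivity
  -- continuity of φ at 0 within Icc 0 a
  have hcont0 : ContinuousWithinAt φ (Icc 0 a) 0 := by
    have hψ0 : HasDerivAt ψ (h' 0) 0 := by
      have := hψd 0 ⟨le_refl 0, hb⟩
      simpa [h0] using this
    have hslope : Tendsto (fun t => ψ t / t) (𝓝[>] (0:ℝ)) (𝓝 (h' 0)) := by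
      have := (hasDerivAt_iff_tendsto_slope.mp hψ0).mono_left
        (nhdsWithin_mono _ (fun x hx => ne_of_gt hx : Ioi (0:ℝ) ⊆ {0}ᶜ))
      refine this.congr (fun t => ?_)
      simp [slope_def_field, hψdef, h0, div_eq_inv_mul]
    have hlin : Tendsto (fun t : ℝ => 1 - 2 * t / ε) (𝓝[>] (0:ℝ)) (𝓝 1) := by
      have hc : ContinuousAt (fun t : ℝ => 1 - 2 * t / ε) 0 := by fun_prop
      have h2 : Tendsto (fun t : ℝ => 1 - 2 * t / ε) (𝓝[>] (0:ℝ)) (𝓝 (1 - 2 * 0 / ε)) :=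
        hc.tendsto.mono_left nhdsWithin_le_nhds
      simpa using h2
    have hmain : Tendsto φ (𝓝[>] (0:ℝ)) (𝓝 (h' 0)) := by
      have := hslope.mul hlin
      rw [mul_one] at this
      refine this.congr' ?_
      filter_upwards [self_mem_nhdsWithin] with t (ht : 0 < t)
      have hne : t ≠ 0 := ne_of_gt ht
      have e : (1:ℝ) - 2 * t / ε = t * (1 / t - 2 / ε) := by
        field_simp
      rw [hφdef]
      simp only [if_neg hne]
      rw [e, ← mul_assoc, div_mul_cancel₀ _ hne]
    unfold ContinuousWithinAt
    have hφ0 : φ 0 = h' 0 := if_pos rfl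
    rw [hφ0]
    refine Tendsto.mono_left ?_ (nhdsWithin_mono _ (Icc_subset_Ici_self))
    rw [show Ici (0:ℝ) = insert 0 (Ioi 0) by rw [Set.Ioi_insert], nhdsWithin_insert,
      tendsto_sup]
    constructor
    · simpa [hφ0] using tendsto_pure_nhds φ 0
    · exact hmain
  have hcont : ContinuousOn φ (Icc 0 a) := by
    intro t ht
    rcases eq_or_lt_of_le ht.1 with rfl | ht0
    · exact hcont0
    · exact ((hφd t ⟨ht0, lt_of_le_of_lt ht.2 hab⟩).continuousAt).continuousWithinAt
  have hanti : AntitoneOn φ (Icc 0 a) := by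
    apply antitoneOn_of_deriv_nonpos (convex_Icc 0 a) hcont
    · intro t ht
      rw [interior_Icc] at ht
      exact ((hφd t ⟨ht.1, lt_trans ht.2 hab⟩).differentiableAt).differentiableWithinAt
    · intro t ht
      rw [interior_Icc] at ht
      rw [(hφd t ⟨ht.1, lt_trans ht.2 hab⟩).deriv]
      exact hφd_nonpos t ht
  have hφa : φ a ≤ D := by
    have := hanti (left_mem_Icc.mpr (le_of_lt hapos)) (right_mem_Icc.mpr (le_of_lt hapos))
      (le_of_lt hapos)
    calc φ a ≤ φ 0 := this
    _ = h' 0 := if_pos rfl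
    _ ≤ D := h'0
  have hφa' : ψ a * (1 - 2 * a / ε) ≤ D * a := by
    have e : φ a = ψ a * (1 - 2 * a / ε) / a := by
      rw [hφdef]; simp only [if_neg (ne_of_gt hapos)]; field_simp
    rw [e] at hφa
    exact (div_le_iff₀ hapos).mp hφa
  have hψa : ψ a ≤ a * D / (1 - 2 * a / ε) := by
    rw [le_div_iff₀ h1a]
    linarith
  have hha : (0:ℝ) < h a := by have := hge a ⟨ha0, hab⟩; linarith
  calc h a = Real.exp (ψ a) := (Real.exp_log hha).symm
  _ ≤ Real.exp (a * D / (1 - 2 * a / ε)) := Real.exp_le_exp.mpr hψa
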